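/- Consider the map s sending a unit vector v ∈ ℝ³ to the symmetric matrix s(v) = 1 − 3·(v vᵀ), where v vᵀ is the rank-one outer product (the orthogonal projection onto the line of v). Then: (a) the image of s on the unit sphere is exactly the orbit {g * diag(1,1,−2) * gᵀ : g ∈ SO(3)}; (b) for unit vectors v, w one has s(v) = s(w) if and only if v = w or v = −w. (Hence the orbit of diag(1,1,−2) is a bijective image of the real projective plane, parameterized by the axis of the eigenvalue −2.) -/

import Mathlib

open Matrix

private lemma key_conj (g : Matrix (Fin 3) (Fin 3) ℝ) (h : g * gᵀ = 1) :
    g * Matrix.diagonal ![1,1,-2] * gᵀ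
      = 1 - (3:ℝ) • Matrix.vecMulVec (fun i => g i 2) (fun i => g i 2) := by
  ext i j
  have h' : (g * gᵀ) i j = (1 : Matrix (Fin 3) (Fin 3) ℝ) i j := by rw [h]
  simp [Matrix.mul_apply, Fin.sum_univ_three, Matrix.transpose_apply,
    Matrix.diagonal_apply, Matrix.vecMulVec_apply, Fin.val_eq_val] at h' ⊢
  linarith [h']

private lemma colnorm (g : Matrix (Fin 3) (Fin 3) ℝ) (h : g * gᵀ = 1) :
    (∑ i, (g i 2) ^ 2) = 1 := by
  have h2 : gᵀ * g = 1 := mul_eq_one_comm.mp h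
  have h' : (gᵀ * g) 2 2 = (1 : Matrix (Fin 3) (Fin 3) ℝ) 2 2 := by rw [h2]
  simp [Matrix.mul_apply, Fin.sum_univ_three, Matrix.transpose_apply] at h'
  simp [Fin.sum_univ_three]
  nlinarith [h']

private lemma construct (v : Fin 3 → ℝ) (hv : (∑ i, v i ^ 2) = 1) :
    ∃ g : Matrix (Fin 3) (Fin 3) ℝ, g * gᵀ = 1 ∧ g.det = 1 ∧ (fun i => g i 2) = v := by
  set a := v 0 with ha; set b := v 1 with hb; set c := v 2 with hc
  have hv' : a^2 + b^2 + c^2 = 1 := by simpa [Fin.sum_univ_three] using hv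
  by_cases h0 : a = 0 ∧ b = 0
  · obtain ⟨h1, h2⟩ := h0
    have hc2 : (c-1)*(c+1) = 0 := by nlinarith
    rcases mul_eq_zero.mp hc2 with h | h
    · have hcv : c = 1 := by linarith
      refine ⟨1, by simp, by simp, ?_⟩
      funext i; fin_cases i <;> simp [Matrix.one_apply]
      · linarith [ha, h1]
      · linarith [hb, h2]
      · linarith [hc, hcv]
    · have hcv : c = -1 := by linarith
      refine ⟨!![1,0,0;0,-1,0;0,0,-1], ?_, ?_, ?_⟩
      · ext i j; fin_cases i <;> fin_cases j <;>
          simp only [Matrix.mul_apply, Fin.sum_univ_three, Matrix.one_apply,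
            Matrix.transpose_apply, Matrix.cons_val_zero, Matrix.cons_val_one, Matrix.head_cons,
            Matrix.cons_val_two, Matrix.tail_cons, Matrix.head_fin_const, Matrix.of_apply,
            Matrix.cons_val', Matrix.empty_val'] <;> norm_num <;> rw [if_neg (by decide)]
      · rw [Matrix.det_fin_three]; simp
      · funext i; fin_cases i
        · show (0:ℝ) = v 0; linarith [ha, h1]
        · show (0:ℝ) = v 1; linarith [hb, h2]
        · show (-1:ℝ) = v 2; linarith [hc, hcv]
  · have hr2 : a^2 + b^2 > 0 := by
      rcases not_and_or.mp h0 with h | h <;> positivity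
    set r := Real.sqrt (a^2 + b^2) with hrdef
    have hr : r > 0 := Real.sqrt_pos.mpr hr2
    have hrsq : r^2 = a^2 + b^2 := Real.sq_sqrt hr2.le
    refine ⟨!![b/r, a*c/r, a; -a/r, b*c/r, b; 0, -r, c], ?_, ?_, ?_⟩
    · ext i j
      fin_cases i <;> fin_cases j <;>
        simp only [Matrix.mul_apply, Fin.sum_univ_three, Matrix.one_apply,
          Matrix.transpose_apply, Matrix.cons_val_zero, Matrix.cons_val_one, Matrix.head_cons,
          Matrix.cons_val_two, Matrix.tail_cons, Matrix.head_fin_const, Matrix.of_apply,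
          Matrix.cons_val', Matrix.empty_val'] <;>
        (try norm_num) <;> (try field_simp) <;> ring_nf <;>
        first
          | rw [if_neg (by decide)]
          | linear_combination a^2*hv' + (a^2-1)*hrsq
          | linear_combination b^2*hv' + (b^2-1)*hrsq
          | linear_combination a*b*r^2*hv' + a*b*r^2*hrsq
          | linear_combination hrsq + hv'
          | linear_combination (a*b)*hv' + (a*b)*hrsq
    · rw [Matrix.det_fin_three]
      simp only [Matrix.cons_val_zero, Matrix.cons_val_one, Matrix.head_cons,
        Matrix.cons_val_two, Matrix.tail_cons, Matrix.head_fin_const, Matrix.of_apply,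
        Matrix.cons_val', Matrix.empty_val']
      field_simp
      ring_nf
      linear_combination (a^2+b^2)*hv' + (a^2+b^2-1)*hrsq
    · funext i; fin_cases i
      · exact ha
      · exact hb
      · exact hc

theorem orbit_param_by_projective_plane :
    ({A : Matrix (Fin 3) (Fin 3) ℝ | ∃ v : Fin 3 → ℝ,
        (∑ i, v i ^ 2) = 1 ∧
        A = (1 : Matrix (Fin 3) (Fin 3) ℝ) - (3 : ℝ) • Matrix.vecMulVec v v}
      =
     {A : Matrix (Fin 3) (Fin 3) ℝ | ∃ g : Matrix (Fin 3) (Fin 3) ℝ,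
        g * gᵀ = 1 ∧ g.det = 1 ∧
        A = g * Matrix.diagonal ![1, 1, -2] * gᵀ}) ∧
    ∀ v w : Fin 3 → ℝ, (∑ i, v i ^ 2) = 1 → (∑ i, w i ^ 2) = 1 →
      (((1 : Matrix (Fin 3) (Fin 3) ℝ) - (3 : ℝ) • Matrix.vecMulVec v v) =
         ((1 : Matrix (Fin 3) (Fin 3) ℝ) - (3 : ℝ) • Matrix.vecMulVec w w) ↔
        v = w ∨ v = -w) := by
  constructor
  · ext A
    simp only [Set.mem_setOf_eq]
    constructor
    · rintro ⟨v, hv, rfl⟩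
      obtain ⟨g, hg1, hg2, hg3⟩ := construct v hv
      exact ⟨g, hg1, hg2, by rw [key_conj g hg1, hg3]⟩
    · rintro ⟨g, hg1, hg2, rfl⟩
      exact ⟨fun i => g i 2, colnorm g hg1, key_conj g hg1⟩
  · intro v w hv hw
    constructor
    · intro h
      have hP : ∀ i j, v i * v j = w i * w j := by
        intro i j
        have := congrFun (congrFun h i) j
        simp [Matrix.vecMulVec_apply] at this
        linarith
      set cc := w 0 * v 0 + w 1 * v 1 + w 2 * v 2 with hcc
      have hvw : ∀ i, v i = w i * cc := by
        intro i
        have h1 : v 0 * v 0 + v 1 * v 1 + v 2 * v 2 = 1 := by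
          have := hv; simp [Fin.sum_univ_three] at this; nlinarith [this]
        calc v i = v i * v 0 * v 0 + v i * v 1 * v 1 + v i * v 2 * v 2 := by
                  linear_combination (-(v i)) * h1
          _ = w i * w 0 * v 0 + w i * w 1 * v 1 + w i * w 2 * v 2 := by
                  rw [hP i 0, hP i 1, hP i 2]
          _ = w i * cc := by rw [hcc]; ring
      have hc2 : cc^2 = 1 := by
        have hv3 : v 0 ^2 + v 1 ^2 + v 2 ^2 = 1 := by simpa [Fin.sum_univ_three] using hv
        have hw3 : w 0 ^2 + w 1 ^2 + w 2 ^2 = 1 := by simpa [Fin.sum_univ_three] using hw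
        have e0 := hvw 0; have e1 := hvw 1; have e2 := hvw 2
        linear_combination hv3 - cc^2*hw3 - (v 0 + w 0*cc)*e0 - (v 1 + w 1*cc)*e1 - (v 2 + w 2*cc)*e2
      rcases mul_self_eq_one_iff.mp (by nlinarith [hc2] : cc * cc = 1) with h1 | h1
      · left; funext i; rw [hvw i, h1, mul_one]
      · right; funext i; rw [hvw i, h1]; simp
    · rintro (rfl | rfl)
      · rfl
      · congr 1
        ext i j
        simp [Matrix.vecMulVec_apply]
        try ring
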